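/- Let X ∈ ℝ^{n×p}, λ > 0, β ∈ ℝ^p, and let pen be a real-valued polyhedral gauge on ℝ^p (pen(b) = max{⟨u_1,b⟩,…,⟨u_k,b⟩} with u_1 = 0). Then there exist y ∈ ℝ^n and β̂ ∈ S_{X,λpen}(y) with ∂pen(β̂) = ∂pen(β) if and only if there exist y ∈ ℝ^n and β̂ ∈ S_{X,λpen}(y) with ∂pen(β̂) ⊆ ∂pen(β). -/

import Mathlib

open scoped RealInnerProductSpace

noncomputable section

/-- Convert a plain coordinate vector to an element of Euclidean space. -/
def toEuc {n : ℕ} (v : Fin n → ℝ) : EuclideanSpace ℝ (Fin n) :=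
  (WithLp.equiv 2 (Fin n → ℝ)).symm v

/-- The subdifferential of `φ : ℝ^p → ℝ` at `β`:
`∂φ(β) = {s : φ(β) + ⟪s, b − β⟫ ≤ φ(b) for all b}`. -/
def subdiff {p : ℕ} (φ : EuclideanSpace ℝ (Fin p) → ℝ) (β : EuclideanSpace ℝ (Fin p)) :
    Set (EuclideanSpace ℝ (Fin p)) :=
  {s | ∀ b, φ β + ⟪s, b - β⟫ ≤ φ b}

/-- `S_{X,λpen}(y)`: the set of minimizers of `b ↦ (1/2)‖y − Xb‖₂² + λ·pen(b)`. -/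
def Smin {n p : ℕ} (X : Matrix (Fin n) (Fin p) ℝ) (lam : ℝ)
    (pen : EuclideanSpace ℝ (Fin p) → ℝ) (y : EuclideanSpace ℝ (Fin n)) :
    Set (EuclideanSpace ℝ (Fin p)) :=
  {b | ∀ b', (1/2) * ‖y - toEuc (X.mulVec b)‖^2 + lam * pen b
        ≤ (1/2) * ‖y - toEuc (X.mulVec b')‖^2 + lam * pen (toEuc b')}

/-- The row space of a matrix `X`: `{Xᵀz : z ∈ ℝ^n}`. -/
def rowSpace {n p : ℕ} (X : Matrix (Fin n) (Fin p) ℝ) : Set (EuclideanSpace ℝ (Fin p)) :=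
  Set.range fun z : EuclideanSpace ℝ (Fin n) => toEuc (X.transpose.mulVec z)

/-- The normal cone of a set `K` at `x`: `{s : ⟪s, b − x⟫ ≤ 0 for all b ∈ K}`. -/
def normalCone' {p : ℕ} (K : Set (EuclideanSpace ℝ (Fin p))) (x : EuclideanSpace ℝ (Fin p)) :
    Set (EuclideanSpace ℝ (Fin p)) :=
  {s | ∀ b ∈ K, ⟪s, b - x⟫ ≤ 0}

/-- The supremum norm `‖x‖_∞` on Euclidean space. -/
def supNorm {p : ℕ} (x : EuclideanSpace ℝ (Fin p)) : ℝ := ⨆ i, abs (x i)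

/-- `F` is an (exposed) face of `P`: `F = {x ∈ P : ⟪a,x⟫ = c}` for some valid inequality
`⟪a,x⟫ ≤ c` of `P`. -/
def IsFace {p : ℕ} (P F : Set (EuclideanSpace ℝ (Fin p))) : Prop :=
  ∃ (a : EuclideanSpace ℝ (Fin p)) (c : ℝ),
    (∀ x ∈ P, ⟪a, x⟫ ≤ c) ∧ F = {x ∈ P | ⟪a, x⟫ = c}

lemma toEuc_add {n : ℕ} (v w : Fin n → ℝ) : toEuc (v + w) = toEuc v + toEuc w := rfl
lemma toEuc_sub {n : ℕ} (v w : Fin n → ℝ) : toEuc (v - w) = toEuc v - toEuc w := rfl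
lemma toEuc_smul {n : ℕ} (t : ℝ) (v : Fin n → ℝ) : toEuc (t • v) = t • toEuc v := rfl

lemma toEuc_adjoint {n p : ℕ} (X : Matrix (Fin n) (Fin p) ℝ) (z : EuclideanSpace ℝ (Fin n))
    (w : EuclideanSpace ℝ (Fin p)) :
    ⟪toEuc (X.transpose.mulVec z), w⟫ = ⟪z, toEuc (X.mulVec w)⟫ := by
  simp only [toEuc, PiLp.inner_apply, RCLike.inner_apply, conj_trivial, WithLp.equiv_symm_apply, WithLp.ofLp_toLp,
    Matrix.mulVec, dotProduct, Matrix.transpose_apply, Finset.sum_mul, Finset.mul_sum]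
  rw [Finset.sum_comm]
  apply Finset.sum_congr rfl; intros; apply Finset.sum_congr rfl; intros; ring

lemma norm_sub_smul_sq {n : ℕ} (r v : EuclideanSpace ℝ (Fin n)) (t : ℝ) :
    ‖r - t • v‖^2 = ‖r‖^2 - 2*t*⟪r,v⟫ + t^2*‖v‖^2 := by
  rw [norm_sub_sq_real, inner_smul_right, norm_smul]
  simp [mul_pow, sq_abs]; ring

lemma aux_nonpos {A C : ℝ} (hC : 0 ≤ C) (h : ∀ t : ℝ, 0 < t → t ≤ 1 → A ≤ t * C) : A ≤ 0 := by
  refine le_of_forall_pos_le_add fun ε hε => ?_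
  have ht0 : 0 < min 1 (ε/(C+1)) := lt_min one_pos (div_pos hε (by linarith))
  have := h _ ht0 (min_le_left _ _)
  have h2 : min 1 (ε/(C+1)) ≤ ε/(C+1) := min_le_right _ _
  have h3 : min 1 (ε/(C+1)) * C ≤ (ε/(C+1)) * (C+1) :=
    mul_le_mul h2 (by linarith) hC (le_of_lt (div_pos hε (by linarith)))
  rw [div_mul_cancel₀] at h3
  · linarith
  · linarith

/-- There exist `y` and `β̂ ∈ S_{X,λpen}(y)` with `∂pen(β̂) = ∂pen(β)` if and
only if there exist `y` and `β̂ ∈ S_{X,λpen}(y)` with `∂pen(β̂) ⊆ ∂pen(β)`. -/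
theorem accessibility_iff_subdiff_subset {n p k : ℕ}
    (X : Matrix (Fin n) (Fin p) ℝ) (lam : ℝ) (hlam : 0 < lam)
    (u : Fin (k + 1) → EuclideanSpace ℝ (Fin p)) (hu : u 0 = 0)
    (pen : EuclideanSpace ℝ (Fin p) → ℝ)
    (hpen : ∀ x, pen x = Finset.univ.sup' Finset.univ_nonempty fun i => ⟪u i, x⟫)
    (β : EuclideanSpace ℝ (Fin p)) :
    (∃ y : EuclideanSpace ℝ (Fin n), ∃ βh ∈ Smin X lam pen y,
        subdiff pen βh = subdiff pen β)
      ↔ (∃ y : EuclideanSpace ℝ (Fin n), ∃ βh ∈ Smin X lam pen y,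
        subdiff pen βh ⊆ subdiff pen β) := by
  constructor
  · rintro ⟨y, βh, hmin, heq⟩
    exact ⟨y, βh, hmin, heq.subset⟩
  · rintro ⟨y, βh, hmin, hsub⟩
    set r : EuclideanSpace ℝ (Fin n) := y - toEuc (X.mulVec βh) with hr
    set s : EuclideanSpace ℝ (Fin p) := toEuc (X.transpose.mulVec r) with hs
    have hpenconv : ∀ (b : EuclideanSpace ℝ (Fin p)) (t : ℝ), 0 ≤ t → t ≤ 1 →
        pen (βh + t • (b - βh)) ≤ (1-t) * pen βh + t * pen b := by
      intro b t ht0 ht1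
      rw [hpen, hpen, hpen]
      apply Finset.sup'_le
      intro i _
      have h1 : ⟪u i, βh⟫
          ≤ Finset.univ.sup' Finset.univ_nonempty (fun j => (⟪u j, βh⟫ : ℝ)) := by
        apply Finset.le_sup' (fun j => (⟪u j, βh⟫ : ℝ)) (Finset.mem_univ i)
      have h2 : ⟪u i, b⟫
          ≤ Finset.univ.sup' Finset.univ_nonempty (fun j => (⟪u j, b⟫ : ℝ)) := by
        apply Finset.le_sup' (fun j => (⟪u j, b⟫ : ℝ)) (Finset.mem_univ i)
      have hlin : ⟪u i, βh + t • (b - βh)⟫ = (1-t) * ⟪u i, βh⟫ + t * ⟪u i, b⟫ := by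
        rw [inner_add_right, inner_smul_right, inner_sub_right]; ring
      rw [hlin]
      have := mul_le_mul_of_nonneg_left h1 (by linarith : (0:ℝ) ≤ 1 - t)
      have := mul_le_mul_of_nonneg_left h2 ht0
      linarith
    have hsg : ∀ b, lam * pen βh + ⟪s, b - βh⟫ ≤ lam * pen b := by
      intro b
      have key : ∀ t : ℝ, 0 < t → t ≤ 1 →
          lam * pen βh + ⟪s, b - βh⟫ - lam * pen b
            ≤ t * ((1/2) * ‖toEuc (X.mulVec (b - βh))‖^2) := by
        intro t ht0 ht1
        have hm := hmin (βh + t • (b - βh))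
        have hte : toEuc (βh.ofLp + t • (b.ofLp - βh.ofLp)) = βh + t • (b - βh) := rfl
        rw [hte] at hm
        have hnorm : y - toEuc (X.mulVec (βh + t • (b - βh)))
            = r - t • toEuc (X.mulVec (b - βh)) := by
          rw [show X.mulVec (βh + t • (b - βh))
                = X.mulVec βh + t • X.mulVec (b - βh) by
              rw [Matrix.mulVec_add, Matrix.mulVec_smul],
            toEuc_add, toEuc_smul, hr, sub_add_eq_sub_sub]
        rw [hnorm, norm_sub_smul_sq] at hm
        have hinner : ⟪r, toEuc (X.mulVec (b - βh))⟫ = ⟪s, b - βh⟫ :=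
          (toEuc_adjoint X r (b - βh)).symm
        have hpc := hpenconv b t ht0.le ht1
        have := mul_le_mul_of_nonneg_left hpc hlam.le
        nlinarith [hm, hinner]
      have hA := aux_nonpos (by positivity) key
      linarith
    have hsgβ : ∀ b, lam * pen β + ⟪s, b - β⟫ ≤ lam * pen b := by
      intro b
      have hmem : lam⁻¹ • s ∈ subdiff pen βh := by
        intro b'
        rw [inner_smul_left]
        simp only [conj_trivial]
        rw [← mul_le_mul_iff_right₀ hlam, mul_add, ← mul_assoc, mul_inv_cancel₀ hlam.ne', one_mul]
        exact hsg b'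
      have h1 := hsub hmem b
      rw [inner_smul_left] at h1
      simp only [conj_trivial] at h1
      have h2 := mul_le_mul_of_nonneg_left h1 hlam.le
      rw [mul_add, ← mul_assoc, mul_inv_cancel₀ hlam.ne', one_mul] at h2
      exact h2
    refine ⟨y + toEuc (X.mulVec (β - βh)), β, ?_, rfl⟩
    intro b0
    obtain ⟨b, rfl⟩ : ∃ b : EuclideanSpace ℝ (Fin p), b.ofLp = b0 := ⟨toEuc b0, rfl⟩
    have hb : toEuc b.ofLp = b := rfl
    rw [hb]
    have hy1 : y + toEuc (X.mulVec (β - βh)) - toEuc (X.mulVec β) = r := by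
      rw [Matrix.mulVec_sub, toEuc_sub, hr]; abel
    have hy2 : y + toEuc (X.mulVec (β - βh)) - toEuc (X.mulVec b)
        = r - (1:ℝ) • toEuc (X.mulVec (b - β)) := by
      rw [one_smul, Matrix.mulVec_sub, Matrix.mulVec_sub, toEuc_sub, toEuc_sub, hr]; abel
    rw [hy1, hy2, norm_sub_smul_sq]
    have hinner : ⟪r, toEuc (X.mulVec (b - β))⟫ = ⟪s, b - β⟫ :=
      (toEuc_adjoint X r (b - β)).symm
    have := hsgβ b
    nlinarith [sq_nonneg (‖toEuc (X.mulVec (b - β))‖)]
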